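/- Let K₁,…,K₄ be nonzero Hilbert spaces and A ∈ B(K₁,K₂), B ∈ B(K₁,K₃) fixed. The equation YA = ZB (for Y ∈ B(K₂,K₄), Z ∈ B(K₃,K₄)) has only the trivial solution Y = 0, Z = 0 if and only if A and B have dense ranges and ran A* ∩ ran B* = {0}. -/

import Mathlib

open ContinuousLinearMap
open scoped InnerProductSpace

private lemma eq_zero_of_inner_dense {E : Type*} [NormedAddCommGroup E]
    [InnerProductSpace ℂ E] {v : E} {s : Set E} (hs : Dense s)
    (h : ∀ y ∈ s, ⟪v, y⟫_ℂ = 0) : v = 0 := by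
  have hfun : ⇑(innerSL ℂ v) = (fun _ : E => (0 : ℂ)) :=
    Continuous.ext_on hs (innerSL ℂ v).continuous continuous_const (fun y hy => h y hy)
  have : ⟪v, v⟫_ℂ = 0 := congrFun hfun v
  exact inner_self_eq_zero.mp this

/-- For fixed `A ∈ B(K₁,K₂)` and `B ∈ B(K₁,K₃)` between nonzero Hilbert spaces,
the equation `Y A = Z B` has only the trivial solution `Y = 0, Z = 0` iff `A`
and `B` have dense ranges and `ran A* ∩ ran B* = {0}`. -/
theorem stmt18 {K₁ K₂ K₃ K₄ : Type*}
    [NormedAddCommGroup K₁] [InnerProductSpace ℂ K₁] [CompleteSpace K₁] [Nontrivial K₁]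
    [NormedAddCommGroup K₂] [InnerProductSpace ℂ K₂] [CompleteSpace K₂] [Nontrivial K₂]
    [NormedAddCommGroup K₃] [InnerProductSpace ℂ K₃] [CompleteSpace K₃] [Nontrivial K₃]
    [NormedAddCommGroup K₄] [InnerProductSpace ℂ K₄] [CompleteSpace K₄] [Nontrivial K₄]
    (A : K₁ →L[ℂ] K₂) (B : K₁ →L[ℂ] K₃) :
    (∀ (Y : K₂ →L[ℂ] K₄) (Z : K₃ →L[ℂ] K₄), Y.comp A = Z.comp B → Y = 0 ∧ Z = 0) ↔
      (DenseRange (⇑A) ∧ DenseRange (⇑B) ∧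
        Set.range (⇑(ContinuousLinearMap.adjoint A)) ∩
          Set.range (⇑(ContinuousLinearMap.adjoint B)) = {0}) := by
  obtain ⟨w₄, hw₄⟩ := exists_ne (0 : K₄)
  constructor
  · intro h
    refine ⟨?_, ?_, ?_⟩
    · -- dense range of A
      by_contra hd
      have hd' : ¬ Dense ((LinearMap.range A.toLinearMap : Submodule ℂ K₂) : Set K₂) := by
        simpa [LinearMap.coe_range, DenseRange] using hd
      rw [Submodule.dense_iff_topologicalClosure_eq_top,
        Submodule.topologicalClosure_eq_top_iff] at hd'
      obtain ⟨w, hwmem, hw0⟩ := (Submodule.ne_bot_iff _).mp hd'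
      set Y : K₂ →L[ℂ] K₄ := (innerSL ℂ w).smulRight w₄ with hY
      have hcomp : Y.comp A = (0 : K₃ →L[ℂ] K₄).comp B := by
        ext x
        have h0 : ⟪w, A x⟫_ℂ = 0 :=
          (Submodule.mem_orthogonal' _ w).mp hwmem _ (LinearMap.mem_range_self _ x)
        simp [hY, h0]
      have := (h Y 0 hcomp).1
      have hYw : Y w = 0 := by rw [this]; rfl
      simp only [hY, smulRight_apply, innerSL_apply_apply] at hYw
      exact hw₄ (by
        have hne : ⟪w, w⟫_ℂ ≠ 0 := inner_self_eq_zero.not.mpr hw0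
        have := smul_eq_zero.mp hYw
        tauto)
    · -- dense range of B
      by_contra hd
      have hd' : ¬ Dense ((LinearMap.range B.toLinearMap : Submodule ℂ K₃) : Set K₃) := by
        simpa [LinearMap.coe_range, DenseRange] using hd
      rw [Submodule.dense_iff_topologicalClosure_eq_top,
        Submodule.topologicalClosure_eq_top_iff] at hd'
      obtain ⟨w, hwmem, hw0⟩ := (Submodule.ne_bot_iff _).mp hd'
      set Z : K₃ →L[ℂ] K₄ := (innerSL ℂ w).smulRight w₄ with hZ
      have hcomp : (0 : K₂ →L[ℂ] K₄).comp A = Z.comp B := by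
        ext x
        have h0 : ⟪w, B x⟫_ℂ = 0 :=
          (Submodule.mem_orthogonal' _ w).mp hwmem _ (LinearMap.mem_range_self _ x)
        simp [hZ, h0]
      have := (h 0 Z hcomp).2
      have hZw : Z w = 0 := by rw [this]; rfl
      simp only [hZ, smulRight_apply, innerSL_apply_apply] at hZw
      exact hw₄ (by
        have hne : ⟪w, w⟫_ℂ ≠ 0 := inner_self_eq_zero.not.mpr hw0
        have := smul_eq_zero.mp hZw
        tauto)
    · -- intersection of adjoint ranges
      apply Set.eq_singleton_iff_unique_mem.mpr
      refine ⟨⟨⟨0, by simp⟩, ⟨0, by simp⟩⟩, ?_⟩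
      rintro x ⟨⟨u, rfl⟩, ⟨v, hv⟩⟩
      by_contra hx
      have hu0 : u ≠ 0 := by rintro rfl; simp at hx
      set Y : K₂ →L[ℂ] K₄ := (innerSL ℂ u).smulRight w₄ with hYdef
      set Z : K₃ →L[ℂ] K₄ := (innerSL ℂ v).smulRight w₄ with hZdef
      have hcomp : Y.comp A = Z.comp B := by
        ext x₁
        have h1 : ⟪u, A x₁⟫_ℂ = ⟪v, B x₁⟫_ℂ := by
          rw [← adjoint_inner_left, ← adjoint_inner_left, hv]
        simp [hYdef, hZdef, h1]
      have := (h Y Z hcomp).1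
      have hYu : Y u = 0 := by rw [this]; rfl
      simp only [hYdef, smulRight_apply, innerSL_apply_apply] at hYu
      exact hw₄ (by
        have hne : ⟪u, u⟫_ℂ ≠ 0 := inner_self_eq_zero.not.mpr hu0
        have := smul_eq_zero.mp hYu
        tauto)
  · rintro ⟨hA, hB, hI⟩ Y Z hYZ
    have hadj : (adjoint A).comp (adjoint Y) = (adjoint B).comp (adjoint Z) := by
      rw [← adjoint_comp, ← adjoint_comp, hYZ]
    have hker : ∀ k : K₄, adjoint Y k = 0 := by
      intro k
      have hmem : (adjoint A) ((adjoint Y) k) ∈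
          Set.range (⇑(adjoint A)) ∩ Set.range (⇑(adjoint B)) := by
        refine ⟨⟨_, rfl⟩, ⟨(adjoint Z) k, ?_⟩⟩
        exact (congrArg (fun T => T k) hadj).symm
      have h0 : (adjoint A) ((adjoint Y) k) = 0 := by
        rw [hI] at hmem; exact hmem
      refine eq_zero_of_inner_dense hA ?_
      rintro y ⟨x, rfl⟩
      rw [← adjoint_inner_left, h0, inner_zero_left]
    have hZker : ∀ k : K₄, adjoint Z k = 0 := by
      intro k
      have hmem : (adjoint B) ((adjoint Z) k) ∈
          Set.range (⇑(adjoint A)) ∩ Set.range (⇑(adjoint B)) := by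
        refine ⟨⟨(adjoint Y) k, congrArg (fun T => T k) hadj⟩, ⟨_, rfl⟩⟩
      have h0 : (adjoint B) ((adjoint Z) k) = 0 := by
        rw [hI] at hmem; exact hmem
      refine eq_zero_of_inner_dense hB ?_
      rintro y ⟨x, rfl⟩
      rw [← adjoint_inner_left, h0, inner_zero_left]
    constructor
    · have : adjoint Y = 0 := ContinuousLinearMap.ext hker
      calc Y = adjoint (adjoint Y) := (adjoint_adjoint Y).symm
        _ = adjoint 0 := by rw [this]
        _ = 0 := by simp
    · have : adjoint Z = 0 := ContinuousLinearMap.ext hZker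
      calc Z = adjoint (adjoint Z) := (adjoint_adjoint Z).symm
        _ = adjoint 0 := by rw [this]
        _ = 0 := by simp
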